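/- arXiv:2306.14094 — 4 statements merged into one kernel-verified Lean document; each statement's English description precedes it below -/
import Mathlib

section
/- For any reals r, v with r > 0, v > 0, r + v < 1, any λ₀ > 0, and any integer t ≥ 1, the sum ∑_{s=1}^{t} λ₀/((t-s+1)^v · (s+1)^r) is at most (2λ₀/(1-r-v)) · ((t+1)^{1-r-v} - 1). -/
open Finset

lemma reflect_sum (t : ℕ) (f : ℕ → ℝ) :
    ∑ s ∈ Icc 1 t, f (t + 1 - s) = ∑ s ∈ Icc 1 t, f s := by
  refine Finset.sum_nbij' (fun s => t + 1 - s) (fun s => t + 1 - s) ?_ ?_ ?_ ?_ ?_ <;>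
    simp only [Finset.mem_Icc] <;> intros <;> first | omega | trivial

lemma rearr (t : ℕ) (a b : ℕ → ℝ)
    (ha : ∀ i ∈ Icc 1 t, ∀ j ∈ Icc 1 t, i ≤ j → a j ≤ a i)
    (hb : ∀ i ∈ Icc 1 t, ∀ j ∈ Icc 1 t, i ≤ j → b j ≤ b i) :
    ∑ s ∈ Icc 1 t, a (t + 1 - s) * b s ≤ ∑ s ∈ Icc 1 t, a s * b s := by
  have key : ∀ s ∈ Icc 1 t,
      a (t + 1 - s) * b s + a s * b (t + 1 - s)
        ≤ a s * b s + a (t + 1 - s) * b (t + 1 - s) := by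
    intro s hs
    simp only [mem_Icc] at hs
    set s' := t + 1 - s with hs'
    have hmem : s' ∈ Icc 1 t := by simp only [mem_Icc]; omega
    have hsmem : s ∈ Icc 1 t := by simp only [mem_Icc]; omega
    rcases le_total s s' with h | h
    · nlinarith [mul_nonneg (sub_nonneg.2 (ha s hsmem s' hmem h))
        (sub_nonneg.2 (hb s hsmem s' hmem h))]
    · nlinarith [mul_nonneg (sub_nonneg.2 (ha s' hmem s hsmem h))
        (sub_nonneg.2 (hb s' hmem s hsmem h))]
  have h1 : ∑ s ∈ Icc 1 t, a s * b (t + 1 - s)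
      = ∑ s ∈ Icc 1 t, a (t + 1 - s) * b s := by
    rw [← reflect_sum t (fun s => a (t + 1 - s) * b s)]
    apply Finset.sum_congr rfl
    intro s hs
    simp only [mem_Icc] at hs
    have h3 : t + 1 - (t + 1 - s) = s := by omega
    simp only [h3]
  have h2 : ∑ s ∈ Icc 1 t, a (t + 1 - s) * b (t + 1 - s)
      = ∑ s ∈ Icc 1 t, a s * b s := reflect_sum t (fun s => a s * b s)
  have h4 := Finset.sum_le_sum key
  rw [Finset.sum_add_distrib, Finset.sum_add_distrib, h1, h2] at h4
  linarith

lemma bern_step (c : ℝ) (hc0 : 0 < c) (hc1 : c ≤ 1) (x : ℝ) (hx : 0 < x) :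
    c * (x + 1) ^ (c - 1) ≤ (x + 1) ^ c - x ^ c := by
  have hx1 : (0:ℝ) < x + 1 := by linarith
  have hu : -1 ≤ -(1 / (x + 1)) := by
    rw [neg_le_neg_iff, div_le_one hx1]; linarith
  have hb := rpow_one_add_le_one_add_mul_self hu hc0.le hc1
  have hxx : 1 + -(1 / (x + 1)) = x / (x + 1) := by field_simp; ring
  rw [hxx] at hb
  have hdiv : (x / (x + 1)) ^ c = x ^ c / (x + 1) ^ c :=
    Real.div_rpow hx.le hx1.le c
  rw [hdiv] at hb
  have hpc : (0:ℝ) < (x + 1) ^ c := Real.rpow_pos_of_pos hx1 c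
  have hb2 : x ^ c ≤ (x + 1) ^ c * (1 + c * -(1 / (x + 1))) := by
    rw [div_le_iff₀ hpc] at hb; linarith [hb]
  have hsub : (x + 1) ^ (c - 1) = (x + 1) ^ c / (x + 1) := by
    rw [Real.rpow_sub hx1, Real.rpow_one]
  rw [hsub]
  have hring : (x + 1) ^ c * (1 + c * -(1 / (x + 1)))
      = (x + 1) ^ c - c * ((x + 1) ^ c / (x + 1)) := by ring
  rw [hring] at hb2
  linarith

lemma tele (c : ℝ) (t : ℕ) :
    ∑ s ∈ Icc 1 t, ((((s:ℝ)) + 1) ^ c - ((s:ℝ)) ^ c) = ((t:ℝ) + 1) ^ c - 1 := by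
  induction t with
  | zero => simp [Real.one_rpow]
  | succ k ih =>
    rw [Finset.sum_Icc_succ_top (by omega), ih]
    push_cast
    ring

/-- Inequality (2T6ii):
`∑_{s=1}^{t} λ₀/((t-s+1)^v (s+1)^r) ≤ (2λ₀/(1-r-v)) ((t+1)^{1-r-v} - 1)`. -/
theorem stmt_4 (r v : ℝ) (hr : 0 < r) (hv : 0 < v) (hrv : r + v < 1)
    (lam0 : ℝ) (hlam0 : 0 < lam0) (t : ℕ) (ht : 1 ≤ t) :
    ∑ s ∈ Finset.Icc 1 t,
        lam0 / (((t - s + 1 : ℕ) : ℝ) ^ v * ((s : ℝ) + 1) ^ r) ≤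
      2 * lam0 / (1 - r - v) * (((t : ℝ) + 1) ^ (1 - r - v) - 1) := by
  set c := 1 - r - v with hc
  have hc0 : 0 < c := by rw [hc]; linarith
  have hc1 : c < 1 := by rw [hc]; linarith
  set a : ℕ → ℝ := fun k => ((k : ℝ)) ^ (-v) with ha_def
  set b : ℕ → ℝ := fun k => ((k : ℝ) + 1) ^ (-r) with hb_def
  -- rewrite LHS
  have hLHS : ∑ s ∈ Finset.Icc 1 t,
      lam0 / (((t - s + 1 : ℕ) : ℝ) ^ v * ((s : ℝ) + 1) ^ r)
      = ∑ s ∈ Finset.Icc 1 t, lam0 * (a (t + 1 - s) * b s) := by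
    apply Finset.sum_congr rfl
    intro s hs
    simp only [Finset.mem_Icc] at hs
    have h1 : t - s + 1 = t + 1 - s := by omega
    have hpos : (0:ℝ) < ((t + 1 - s : ℕ) : ℝ) := by
      have h2 : 1 ≤ t + 1 - s := by omega
      exact_mod_cast Nat.lt_of_lt_of_le Nat.zero_lt_one h2
    have hpos2 : (0:ℝ) < (s : ℝ) + 1 := by positivity
    rw [h1, ha_def, hb_def]
    simp only [Real.rpow_neg hpos.le, Real.rpow_neg hpos2.le]
    field_simp
  rw [hLHS]
  -- antitonicity
  have ha_anti : ∀ i ∈ Finset.Icc 1 t, ∀ j ∈ Finset.Icc 1 t, i ≤ j → a j ≤ a i := by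
    intro i hi j hj hij
    simp only [Finset.mem_Icc] at hi hj
    rw [ha_def]
    apply Real.rpow_le_rpow_of_nonpos
    · exact_mod_cast Nat.lt_of_lt_of_le Nat.zero_lt_one hi.1
    · exact_mod_cast hij
    · linarith
  have hb_anti : ∀ i ∈ Finset.Icc 1 t, ∀ j ∈ Finset.Icc 1 t, i ≤ j → b j ≤ b i := by
    intro i hi j hj hij
    simp only [Finset.mem_Icc] at hi hj
    rw [hb_def]
    apply Real.rpow_le_rpow_of_nonpos
    · positivity
    · have : (i:ℝ) ≤ (j:ℝ) := by exact_mod_cast hij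
      linarith
    · linarith
  have hre := rearr t a b ha_anti hb_anti
  -- termwise bound on the sorted sum
  have hterm : ∀ s ∈ Finset.Icc 1 t,
      a s * b s ≤ (2 / c) * ((((s:ℝ)) + 1) ^ c - ((s:ℝ)) ^ c) := by
    intro s hs
    simp only [Finset.mem_Icc] at hs
    set x : ℝ := (s : ℝ) with hx_def
    have hx1 : (1:ℝ) ≤ x := by rw [hx_def]; exact_mod_cast hs.1
    have hx0 : (0:ℝ) < x := by linarith
    have hxp1 : (0:ℝ) < x + 1 := by linarith
    -- (x+1)^v ≤ 2 * x^v
    have h2v : (x + 1) ^ v ≤ 2 * x ^ v := by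
      have h1 : (x + 1) ^ v ≤ (2 * x) ^ v :=
        Real.rpow_le_rpow hxp1.le (by linarith) hv.le
      have h2 : (2 * x) ^ v = 2 ^ v * x ^ v :=
        Real.mul_rpow (by norm_num) hx0.le
      have h3 : (2:ℝ) ^ v ≤ 2 := by
        calc (2:ℝ) ^ v ≤ (2:ℝ) ^ (1:ℝ) :=
              Real.rpow_le_rpow_of_exponent_le one_le_two (by linarith)
          _ = 2 := Real.rpow_one 2
      have hxv : (0:ℝ) ≤ x ^ v := (Real.rpow_pos_of_pos hx0 v).le
      calc (x + 1) ^ v ≤ 2 ^ v * x ^ v := h2 ▸ h1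
        _ ≤ 2 * x ^ v := by nlinarith
    -- a s * b s ≤ 2 * (x+1)^(c-1)
    have hab : a s * b s ≤ 2 * (x + 1) ^ (c - 1) := by
      have hav : a s = (x ^ v)⁻¹ := by
        rw [ha_def]; simp only [← hx_def]; rw [Real.rpow_neg hx0.le]
      have hbv : b s = ((x + 1) ^ r)⁻¹ := by
        rw [hb_def]; simp only [← hx_def]; rw [Real.rpow_neg hxp1.le]
      have hc1' : (x + 1) ^ (c - 1) = ((x + 1) ^ v * (x + 1) ^ r)⁻¹ := by
        rw [← Real.rpow_add hxp1, ← Real.rpow_neg hxp1.le]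
        congr 1
        rw [hc]; ring
      rw [hav, hbv, hc1', ← mul_inv]
      have hxvp : (0:ℝ) < x ^ v := Real.rpow_pos_of_pos hx0 v
      have hxrp : (0:ℝ) < (x + 1) ^ r := Real.rpow_pos_of_pos hxp1 r
      have hxvp1 : (0:ℝ) < (x + 1) ^ v := Real.rpow_pos_of_pos hxp1 v
      have heq : ((x + 1) ^ v * (x + 1) ^ r)⁻¹ * 2
          = (((x + 1) ^ v * (x + 1) ^ r) / 2)⁻¹ := by
        rw [inv_div]; ring
      rw [mul_comm (2:ℝ) _, heq]
      apply inv_anti₀ (by positivity)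
      rw [div_le_iff₀ (by norm_num : (0:ℝ) < 2)]
      nlinarith
    -- Bernoulli step
    have hbe := bern_step c hc0 hc1.le x hx0
    have : 2 * (x + 1) ^ (c - 1) ≤ (2 / c) * ((x + 1) ^ c - x ^ c) := by
      rw [div_mul_eq_mul_div, le_div_iff₀ hc0]
      nlinarith
    linarith
  -- telescoping sum
  have htel := tele c t
  -- assemble
  calc ∑ s ∈ Finset.Icc 1 t, lam0 * (a (t + 1 - s) * b s)
      = lam0 * ∑ s ∈ Finset.Icc 1 t, a (t + 1 - s) * b s := by rw [Finset.mul_sum]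
    _ ≤ lam0 * ∑ s ∈ Finset.Icc 1 t, a s * b s :=
        mul_le_mul_of_nonneg_left hre hlam0.le
    _ ≤ lam0 * ∑ s ∈ Finset.Icc 1 t, (2 / c) * ((((s:ℝ)) + 1) ^ c - ((s:ℝ)) ^ c) :=
        mul_le_mul_of_nonneg_left (Finset.sum_le_sum hterm) hlam0.le
    _ = 2 * lam0 / c * (((t : ℝ) + 1) ^ c - 1) := by
        rw [← Finset.mul_sum, htel]; ring
end

section
/- For any reals r, v with 1/2 < v < 1, 0 < r, r + v < 1, and any integer t ≥ 1, it holds that ∑_{s=0}^{t-1} (s+1)^{r+1}/(t-s+1)^{1+v} ≤ (1/v) · ((t+1)^{r+1} - (t+1)^{-v}). -/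
open Real Finset

lemma key (v x : ℝ) (hv : 0 < v) (hv1 : v ≤ 1) (hx : 1 ≤ x) :
    v * (x + 1) ^ (-(1 + v)) ≤ x ^ (-v) - (x + 1) ^ (-v) := by
  have hx0 : 0 < x := lt_of_lt_of_le one_pos hx
  have hx1 : 0 < x + 1 := by linarith
  have hb : (1 + (-(1/(x+1)))) ^ v ≤ 1 + v * (-(1/(x+1))) := by
    apply rpow_one_add_le_one_add_mul_self _ hv.le hv1
    rw [neg_le, neg_neg, div_le_one hx1]; linarith
  have h1 : (1 : ℝ) + (-(1/(x+1))) = x / (x+1) := by field_simp; ring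
  rw [h1, div_rpow hx0.le hx1.le] at hb
  set A := x ^ v with hA
  set B := (x+1) ^ v with hB
  have hAp : (0:ℝ) < A := rpow_pos_of_pos hx0 v
  have hBp : (0:ℝ) < B := rpow_pos_of_pos hx1 v
  have hAB : A ≤ B := rpow_le_rpow hx0.le (by linarith) hv.le
  have hb2 : A * (x+1) ≤ B * (x+1) - v * B := by
    rw [div_le_iff₀ hBp] at hb
    have : (1 + v * -(1 / (x + 1))) * B * (x+1) = B * (x+1) - v * B := by
      field_simp; ring
    nlinarith [mul_le_mul_of_nonneg_right hb hx1.le]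
  have key2 : v * A ≤ (x+1) * (B - A) := by nlinarith
  rw [show -(1+v) = -1 + -v by ring, rpow_add hx1, rpow_neg_one,
    rpow_neg hx0.le, rpow_neg hx1.le, ← hA, ← hB]
  have h : v * ((x+1)⁻¹ * B⁻¹) = (v*A)/(A*B*(x+1)) := by
    field_simp
  have h' : A⁻¹ - B⁻¹ = ((x+1)*(B-A))/(A*B*(x+1)) := by
    field_simp
  rw [h, h']
  gcongr

/-- Inequality (2T6vi1):
`∑_{s=0}^{t-1} (s+1)^{r+1}/(t-s+1)^{1+v} ≤ (1/v) ((t+1)^{r+1} - (t+1)^{-v})`. -/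
theorem stmt_5 (r v : ℝ) (hv : 1 / 2 < v) (hv1 : v < 1) (hr : 0 < r)
    (hrv : r + v < 1) (t : ℕ) (ht : 1 ≤ t) :
    ∑ s ∈ Finset.range t,
        ((s : ℝ) + 1) ^ (r + 1) / (((t - s + 1 : ℕ) : ℝ)) ^ (1 + v) ≤
      (1 / v) * (((t : ℝ) + 1) ^ (r + 1) - ((t : ℝ) + 1) ^ (-v)) := by
  have hv0 : 0 < v := by linarith
  have htR : (1:ℝ) ≤ (t:ℝ) := by exact_mod_cast ht
  rw [← Finset.sum_range_reflect]
  have hstep : ∀ j ∈ Finset.range t,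
      (((t - 1 - j : ℕ) : ℝ) + 1) ^ (r + 1) / (((t - (t - 1 - j) + 1 : ℕ) : ℝ)) ^ (1 + v)
        ≤ ((t:ℝ)+1) ^ (r+1) * ((1/v) * (((j:ℝ)+1) ^ (-v) - ((j:ℝ)+2) ^ (-v))) := by
    intro j hj
    have hjt : j < t := Finset.mem_range.mp hj
    have e1 : (t - (t - 1 - j) + 1 : ℕ) = j + 2 := by omega
    rw [e1]
    have hnum : (((t - 1 - j : ℕ):ℝ) + 1) ≤ (t:ℝ) + 1 := by
      have h1 : (t - 1 - j : ℕ) ≤ t := by omega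
      have : ((t - 1 - j : ℕ):ℝ) ≤ (t:ℝ) := Nat.cast_le.mpr h1
      linarith
    have hj2 : (0:ℝ) < (j:ℝ) + 2 := by positivity
    have hden : (0:ℝ) < ((j+2:ℕ):ℝ) ^ (1+v) := rpow_pos_of_pos (by positivity) _
    calc (((t - 1 - j : ℕ):ℝ) + 1) ^ (r+1) / ((j+2:ℕ):ℝ) ^ (1+v)
        ≤ ((t:ℝ)+1) ^ (r+1) / ((j:ℝ)+2) ^ (1+v) := by
          push_cast
          gcongr
      _ = ((t:ℝ)+1) ^ (r+1) * (((j:ℝ)+2) ^ (-(1+v))) := by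
          rw [rpow_neg hj2.le, div_eq_mul_inv]
      _ ≤ ((t:ℝ)+1) ^ (r+1) * ((1/v) * (((j:ℝ)+1) ^ (-v) - ((j:ℝ)+2) ^ (-v))) := by
          apply mul_le_mul_of_nonneg_left _ (by positivity)
          have hk := key v ((j:ℝ)+1) hv0 hv1.le (le_add_of_nonneg_left (Nat.cast_nonneg j))
          have e2 : (j:ℝ) + 1 + 1 = (j:ℝ) + 2 := by ring
          rw [e2] at hk
          rw [one_div, inv_mul_eq_div, le_div_iff₀ hv0]
          linarith
  refine le_trans (Finset.sum_le_sum hstep) ?_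
  rw [← Finset.mul_sum]
  have hsum : ∑ j ∈ Finset.range t, (1/v) * (((j:ℝ)+1) ^ (-v) - ((j:ℝ)+2) ^ (-v))
      = (1/v) * (1 - ((t:ℝ)+1) ^ (-v)) := by
    rw [← Finset.mul_sum]
    congr 1
    have : ∑ j ∈ Finset.range t, (((j:ℝ)+1) ^ (-v) - ((j:ℝ)+2) ^ (-v))
        = ∑ j ∈ Finset.range t,
          ((fun k : ℕ => ((k:ℝ)+1) ^ (-v)) j - (fun k : ℕ => ((k:ℝ)+1) ^ (-v)) (j+1)) := by
      apply Finset.sum_congr rfl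
      intro j _
      simp only []
      push_cast
      ring_nf
    rw [this, Finset.sum_range_sub']
    simp [one_rpow]
  rw [hsum]
  have hC1 : (1:ℝ) ≤ ((t:ℝ)+1) ^ (r+1) := one_le_rpow (by linarith) (by linarith)
  have hX : (0:ℝ) < ((t:ℝ)+1) ^ (-v) := rpow_pos_of_pos (by linarith) _
  have e3 : ((t:ℝ)+1) ^ (r+1) * ((1/v) * (1 - ((t:ℝ)+1) ^ (-v)))
      = (1/v) * (((t:ℝ)+1) ^ (r+1) - ((t:ℝ)+1) ^ (r+1) * ((t:ℝ)+1) ^ (-v)) := by ring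
  rw [e3]
  apply mul_le_mul_of_nonneg_left _ (by positivity)
  nlinarith [hC1, hX]
end

section
/- For any reals v ∈ (1/2, 1), r = (1-v)/2, λ₀ > 0, and any integer t ≥ 0, the sum ∑_{s=0}^{t} λ₀·(s+1)^{r+1}/((t+2)·(t-s+1)^{1+v}) is at most λ₀·(1/v + 1)·(t+1)^r. -/
open Real Finset

/-- Convexity/Bernoulli step: `v·(x+1)^{-(1+v)} ≤ x^{-v} - (x+1)^{-v}` for `x ≥ 1`. -/
lemma key_step (v : ℝ) (hv0 : 0 < v) (hv1 : v ≤ 1) (x : ℝ) (hx : 1 ≤ x) :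
    v * (x + 1) ^ (-(1 + v)) ≤ x ^ (-v) - (x + 1) ^ (-v) := by
  set y : ℝ := x + 1 with hy_def
  have hy : (2 : ℝ) ≤ y := by simp [hy_def]; linarith
  have hy0 : (0 : ℝ) < y := by linarith
  have hx0 : (0 : ℝ) < x := by linarith
  have hyinv : 1 / y ≤ 1 / 2 := by
    rw [div_le_div_iff₀ hy0 (by norm_num)]; linarith
  have hyinv0 : 0 < 1 / y := by positivity
  -- Bernoulli: (1 - 1/y)^v ≤ 1 - v/y
  have hb : (1 - 1 / y) ^ v ≤ 1 - v * (1 / y) := by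
    have := rpow_one_add_le_one_add_mul_self (s := -(1 / y))
      (by linarith) hv0.le hv1 (p := v)
    simpa [sub_eq_add_neg] using this
  have h1 : (0 : ℝ) < 1 - 1 / y := by linarith
  have h2 : (0 : ℝ) < 1 - v * (1 / y) := by nlinarith
  have hp : 0 < (1 - 1 / y) ^ v := Real.rpow_pos_of_pos h1 v
  -- hence (1-1/y)^{-v} ≥ 1 + v/y
  have h3 : 1 + v * (1 / y) ≤ (1 - 1 / y) ^ (-v) := by
    rw [Real.rpow_neg h1.le, inv_eq_one_div, le_div_iff₀ hp]
    nlinarith [mul_le_mul_of_nonneg_left hb (by positivity : (0:ℝ) ≤ 1 + v * (1 / y)),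
      sq_nonneg (v * (1 / y))]
  have hfin : x ^ (-v) = y ^ (-v) * (1 - 1 / y) ^ (-v) := by
    have hxy : x = y * (1 - 1 / y) := by field_simp; rw [hy_def]; ring
    rw [hxy, Real.mul_rpow hy0.le h1.le]
  have hsplit : y ^ (-(1 + v)) = y ^ (-v) * y⁻¹ := by
    rw [show -(1 + v) = -v + -1 by ring, Real.rpow_add hy0, Real.rpow_neg_one]
  have hyv : 0 < y ^ (-v) := Real.rpow_pos_of_pos hy0 _
  have hmul := mul_le_mul_of_nonneg_left h3 hyv.le
  rw [← hfin] at hmul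
  rw [hsplit, hfin]
  rw [one_div] at hmul
  nlinarith [hmul]

/-- `∑_{j=0}^{n} (j+1)^{-(1+v)} ≤ 1/v + 1`. -/
lemma series_bound (v : ℝ) (hv0 : 0 < v) (hv1 : v ≤ 1) (n : ℕ) :
    ∑ j ∈ Finset.range (n + 1), ((j : ℝ) + 1) ^ (-(1 + v)) ≤ 1 / v + 1 := by
  have main : ∀ m : ℕ, ∑ j ∈ Finset.range (m + 1), ((j : ℝ) + 1) ^ (-(1 + v)) ≤
      1 + (1 / v) * (1 - ((m : ℝ) + 1) ^ (-v)) := by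
    intro m
    induction m with
    | zero => simp
    | succ m ih =>
      rw [Finset.sum_range_succ]
      push_cast
      have hk := key_step v hv0 hv1 ((m : ℝ) + 1) (by linarith [Nat.cast_nonneg (α := ℝ) m])
      have h' : ((m : ℝ) + 1 + 1) ^ (-(1 + v)) ≤
          (((m : ℝ) + 1) ^ (-v) - ((m : ℝ) + 1 + 1) ^ (-v)) / v := by
        rw [le_div_iff₀ hv0]; linarith
      rw [div_eq_mul_inv, ← one_div] at h'
      linarith
  have hfin := main n
  have h0 : 0 ≤ ((n : ℝ) + 1) ^ (-v) := Real.rpow_nonneg (by positivity) _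
  have hv' : 0 < 1 / v := by positivity
  nlinarith

/-- Inequality (2T6vi2): with `r = (1-v)/2`,
`∑_{s=0}^{t} λ₀ (s+1)^{r+1}/((t+2)(t-s+1)^{1+v}) ≤ λ₀ (1/v + 1) (t+1)^r`. -/
theorem stmt_6 (v r : ℝ) (hv : 1 / 2 < v) (hv1 : v < 1)
    (hr : r = (1 - v) / 2) (lam0 : ℝ) (hlam0 : 0 < lam0) (t : ℕ) :
    ∑ s ∈ Finset.range (t + 1),
        lam0 * ((s : ℝ) + 1) ^ (r + 1) /
          (((t : ℝ) + 2) * (((t - s + 1 : ℕ) : ℝ)) ^ (1 + v)) ≤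
      lam0 * (1 / v + 1) * ((t : ℝ) + 1) ^ r := by
  have hv0 : (0 : ℝ) < v := by linarith
  have hr0 : 0 < r := by rw [hr]; linarith
  have hB : (0 : ℝ) < ((t : ℝ) + 1) ^ r := Real.rpow_pos_of_pos (by positivity) r
  calc ∑ s ∈ Finset.range (t + 1),
        lam0 * ((s : ℝ) + 1) ^ (r + 1) /
          (((t : ℝ) + 2) * (((t - s + 1 : ℕ) : ℝ)) ^ (1 + v))
      ≤ ∑ s ∈ Finset.range (t + 1),
          lam0 * ((t : ℝ) + 1) ^ r * (((t - s + 1 : ℕ) : ℝ)) ^ (-(1 + v)) := by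
        apply Finset.sum_le_sum
        intro s hs
        have hst : s ≤ t := Nat.lt_succ_iff.mp (Finset.mem_range.mp hs)
        set K : ℝ := ((t - s + 1 : ℕ) : ℝ) with hK_def
        have hK : (1 : ℝ) ≤ K := by
          rw [hK_def]; exact_mod_cast Nat.succ_le_succ (Nat.zero_le _)
        have hK0 : (0 : ℝ) < K := lt_of_lt_of_le one_pos hK
        have hKp : (0 : ℝ) < K ^ (1 + v) := Real.rpow_pos_of_pos hK0 _
        rw [Real.rpow_neg hK0.le, mul_assoc, ← div_eq_mul_inv,
          ← mul_div_assoc, div_le_div_iff₀ (by positivity) hKp]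
        have hA : ((s : ℝ) + 1) ^ (r + 1) ≤ ((t : ℝ) + 1) ^ r * ((t : ℝ) + 2) := by
          calc ((s : ℝ) + 1) ^ (r + 1) ≤ ((t : ℝ) + 1) ^ (r + 1) := by
                apply Real.rpow_le_rpow (by positivity) _ (by linarith)
                have : (s : ℝ) ≤ (t : ℝ) := by exact_mod_cast hst
                linarith
            _ = ((t : ℝ) + 1) ^ r * ((t : ℝ) + 1) := Real.rpow_add_one (by positivity) r
            _ ≤ ((t : ℝ) + 1) ^ r * ((t : ℝ) + 2) := by nlinarith
        have hstep : lam0 * ((s : ℝ) + 1) ^ (r + 1) ≤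
            lam0 * (((t : ℝ) + 1) ^ r * ((t : ℝ) + 2)) :=
          mul_le_mul_of_nonneg_left hA hlam0.le
        nlinarith [mul_le_mul_of_nonneg_right hstep hKp.le]
    _ = lam0 * ((t : ℝ) + 1) ^ r *
          ∑ s ∈ Finset.range (t + 1), (((t - s + 1 : ℕ) : ℝ)) ^ (-(1 + v)) := by
        rw [Finset.mul_sum]
    _ = lam0 * ((t : ℝ) + 1) ^ r *
          ∑ j ∈ Finset.range (t + 1), (((j + 1 : ℕ) : ℝ)) ^ (-(1 + v)) := by
        congr 1
        rw [← Finset.sum_range_reflect (fun j => (((j + 1 : ℕ) : ℝ)) ^ (-(1 + v))) (t + 1)]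
        apply Finset.sum_congr rfl
        intro s hs
        simp
    _ ≤ lam0 * ((t : ℝ) + 1) ^ r * (1 / v + 1) := by
        apply mul_le_mul_of_nonneg_left _ (by positivity)
        have := series_bound v hv0 hv1.le t
        convert this using 2 with j
        push_cast
        exacts [rfl, by push_cast; ring]
    _ = lam0 * (1 / v + 1) * ((t : ℝ) + 1) ^ r := by ring
end

section
/- Suppose a nonnegative real sequence Δ_t satisfies Δ_{t+1} ≤ (1 - C₁/(t+1)^u)·Δ_t + C₀/(t+1)^{1+v} for all t ≥ T, where 0 < u < 1, v > u, C₀ > 0, C₁ > 0, and C₁/(t+1)^u < 1 for all t ≥ T. Then there exists a constant C₂ > 0 such that Δ_t ≤ C₂·C₀/(C₁·(t+1)^{1+v-u}) for all t ≥ 1. -/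
open Real Filter

/-- Bernoulli-type bound: `(1 - w/x) * (x+1)^w ≤ x^w` for `1 ≤ w`, `1 ≤ x`. -/
lemma stmt_8_bern {w x : ℝ} (hw : 1 ≤ w) (hx : 1 ≤ x) :
    (1 - w / x) * (x + 1) ^ w ≤ x ^ w := by
  have hx0 : (0:ℝ) < x := lt_of_lt_of_le one_pos hx
  have hx1 : (0:ℝ) < x + 1 := by linarith
  have hpow1 : (0:ℝ) < (x + 1) ^ w := Real.rpow_pos_of_pos hx1 w
  have hpowx : (0:ℝ) ≤ x ^ w := Real.rpow_nonneg hx0.le w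
  rcases le_or_gt (1 - w / x) 0 with h | h
  · nlinarith
  · have hs : (-1 : ℝ) ≤ -1 / (x + 1) := by
      rw [neg_div]
      have h1 : 1 / (x + 1) ≤ 1 := by
        rw [div_le_one hx1]; linarith
      linarith
    have hb := one_add_mul_self_le_rpow_one_add hs hw
    have he : (1 : ℝ) + -1 / (x + 1) = x / (x + 1) := by field_simp; ring
    rw [he, Real.div_rpow hx0.le hx1.le] at hb
    have h1 : (1 - w / (x + 1)) * (x + 1) ^ w ≤ x ^ w := by
      have := mul_le_mul_of_nonneg_right hb hpow1.le
      calc (1 - w / (x + 1)) * (x + 1) ^ w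
          = (1 + w * (-1 / (x + 1))) * (x + 1) ^ w := by ring
        _ ≤ (x ^ w / (x + 1) ^ w) * (x + 1) ^ w := this
        _ = x ^ w := by field_simp
    have h2 : (1 - w / x) ≤ (1 - w / (x + 1)) := by
      have : w / (x + 1) ≤ w / x := by
        gcongr <;> linarith
      linarith
    calc (1 - w / x) * (x + 1) ^ w ≤ (1 - w / (x + 1)) * (x + 1) ^ w :=
          mul_le_mul_of_nonneg_right h2 hpow1.le
      _ ≤ x ^ w := h1

lemma stmt_8_exp_l (M C0 C1 P R Q : ℝ) (hP : P ≠ 0) (hQ : Q ≠ 0) :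
    ((1 - C1 / P) * (M / Q) + C0 / (Q * P)) * (Q * P * R) = M * R * (P - C1) + C0 * R := by
  field_simp

lemma stmt_8_exp_r (M w P R Q : ℝ) (hP : P ≠ 0) (hR : R ≠ 0) (hQ : Q ≠ 0) :
    (M * (1 - w / (R * P)) / Q) * (Q * P * R) = M * (R * P - w) := by
  rw [div_mul_eq_mul_div, div_eq_iff hQ]
  have h : w / (R * P) * (R * P) = w := div_mul_cancel₀ w (mul_ne_zero hR hP)
  linear_combination (-(M * Q)) * h

set_option maxHeartbeats 1000000 in
/-- Sequence convergence lemma (Lemma 3) applied in the privacy analysis: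
a nonnegative sequence satisfying the stated recursion for `t ≥ T` obeys
`Δ_t ≤ C₂ C₀ / (C₁ (t+1)^{1+v-u})` for all `t ≥ 1`, for some constant `C₂ > 0`. -/
theorem stmt_8 (Δ : ℕ → ℝ) (hΔ : ∀ t, 0 ≤ Δ t)
    (u v C0 C1 : ℝ) (hu0 : 0 < u) (hu1 : u < 1) (hv : u < v)
    (hC0 : 0 < C0) (hC1 : 0 < C1) (T : ℕ)
    (hsmall : ∀ t ≥ T, C1 / ((t : ℝ) + 1) ^ u < 1)
    (hrec : ∀ t ≥ T,
      Δ (t + 1) ≤ (1 - C1 / ((t : ℝ) + 1) ^ u) * Δ t + C0 / ((t : ℝ) + 1) ^ (1 + v)) :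
    ∃ C2 : ℝ, 0 < C2 ∧ ∀ t : ℕ, 1 ≤ t →
      Δ t ≤ C2 * C0 / (C1 * ((t : ℝ) + 1) ^ (1 + v - u)) := by
  set w : ℝ := 1 + v - u with hw_def
  have hw1 : 1 ≤ w := by rw [hw_def]; linarith
  have hw0 : 0 < w := by linarith
  -- choose T1' beyond which (t+1)^(1-u) ≥ 2w/C1
  have htend : Tendsto (fun t : ℕ => ((t : ℝ) + 1) ^ (1 - u)) atTop atTop := by
    apply (tendsto_rpow_atTop (by linarith : (0:ℝ) < 1 - u)).comp
    exact tendsto_atTop_add_const_right _ 1 tendsto_natCast_atTop_atTop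
  obtain ⟨T1', hT1'⟩ := Filter.eventually_atTop.mp
    (htend.eventually_ge_atTop (2 * w / C1))
  set T1 : ℕ := max T T1' with hT1_def
  set M : ℝ := max (2 * C0 / C1)
    ((Finset.range (T1 + 1)).sup' ⟨0, Finset.mem_range.mpr (Nat.succ_pos _)⟩
      fun t => Δ t * ((t : ℝ) + 1) ^ w) with hM_def
  have hM0 : 0 < M := lt_of_lt_of_le (by positivity) (le_max_left _ _)
  have hMge : 2 * C0 / C1 ≤ M := le_max_left _ _
  -- base case: all t ≤ T1
  have base : ∀ t ≤ T1, Δ t ≤ M / ((t : ℝ) + 1) ^ w := by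
    intro t ht
    have hmem : t ∈ Finset.range (T1 + 1) := Finset.mem_range.mpr (Nat.lt_succ_of_le ht)
    have hle : Δ t * ((t : ℝ) + 1) ^ w ≤ M :=
      le_trans (Finset.le_sup' (fun t => Δ t * ((t : ℝ) + 1) ^ w) hmem) (le_max_right _ _)
    have hpos : (0:ℝ) < ((t : ℝ) + 1) ^ w :=
      Real.rpow_pos_of_pos (by positivity) w
    rw [le_div_iff₀ hpos]
    exact hle
  -- main induction
  have key : ∀ t, Δ t ≤ M / ((t : ℝ) + 1) ^ w := by
    intro t
    induction t with
    | zero => exact base 0 (Nat.zero_le _)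
    | succ s ih =>
      rcases le_or_gt (s + 1) T1 with hle | hlt
      · exact base _ hle
      · have hsT1 : T1 ≤ s := Nat.lt_succ_iff.mp hlt
        have hsT : T ≤ s := le_trans (le_max_left _ _) hsT1
        set x : ℝ := (s : ℝ) + 1 with hx_def
        have hx1 : (1:ℝ) ≤ x := by rw [hx_def]; push_cast; linarith [Nat.cast_nonneg (α := ℝ) s]
        have hx0 : (0:ℝ) < x := lt_of_lt_of_le one_pos hx1
        set P : ℝ := x ^ u with hP_def
        set Q : ℝ := x ^ w with hQ_def
        set R : ℝ := x ^ (1 - u) with hR_def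
        have hP0 : 0 < P := Real.rpow_pos_of_pos hx0 u
        have hQ0 : 0 < Q := Real.rpow_pos_of_pos hx0 w
        have hR0 : 0 < R := Real.rpow_pos_of_pos hx0 (1 - u)
        have hRP : R * P = x := by
          rw [hR_def, hP_def, ← Real.rpow_add hx0]
          norm_num
        have hQP : Q * P = x ^ (1 + v) := by
          rw [hQ_def, hP_def, ← Real.rpow_add hx0, hw_def]
          ring_nf
        have hR : 2 * w / C1 ≤ R := hT1' s (le_trans (le_max_right _ _) hsT1)
        have hrec' := hrec s hsT
        have hsmall' := hsmall s hsT
        have hans : (1 - C1 / P) * (M / Q) + C0 / (Q * P) ≤ M * (1 - w / (R * P)) / Q := by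
          have h1 : C0 * R + M * w ≤ M * (R * C1) := by
            have hRC : 2 * w ≤ R * C1 := by
              rw [div_le_iff₀ hC1] at hR
              linarith
            have hMC : 2 * C0 ≤ M * C1 := by
              rw [div_le_iff₀ hC1] at hMge
              linarith
            nlinarith [mul_le_mul_of_nonneg_left hRC hM0.le,
              mul_le_mul_of_nonneg_left hMC hR0.le]
          have expand_l := stmt_8_exp_l M C0 C1 P R Q hP0.ne' hQ0.ne'
          have expand_r := stmt_8_exp_r M w P R Q hP0.ne' hR0.ne' hQ0.ne'
          have hmul : ((1 - C1 / P) * (M / Q) + C0 / (Q * P)) * (Q * P * R)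
              ≤ (M * (1 - w / (R * P)) / Q) * (Q * P * R) := by
            rw [expand_l, expand_r]
            nlinarith [h1]
          exact le_of_mul_le_mul_right hmul (by positivity)
        have hstep1 : Δ (s + 1) ≤ (1 - C1 / P) * (M / Q) + C0 / (Q * P) := by
          have h1 : (1 - C1 / P) * Δ s ≤ (1 - C1 / P) * (M / Q) := by
            apply mul_le_mul_of_nonneg_left _ (by linarith [hsmall'])
            rw [hQ_def]
            exact ih
          calc Δ (s + 1) ≤ (1 - C1 / P) * Δ s + C0 / x ^ (1 + v) := hrec'
            _ ≤ (1 - C1 / P) * (M / Q) + C0 / (Q * P) := by rw [hQP]; linarith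
        have hbern : M * (1 - w / (R * P)) / Q ≤ M / (x + 1) ^ w := by
          rw [hRP]
          have hb := stmt_8_bern hw1 hx1
          have hp1 : (0:ℝ) < (x + 1) ^ w := Real.rpow_pos_of_pos (by linarith) w
          rw [div_le_div_iff₀ hQ0 hp1]
          have h := mul_le_mul_of_nonneg_left hb hM0.le
          rw [← mul_assoc] at h
          rw [hQ_def]
          exact h
        have hcast : ((s + 1 : ℕ) : ℝ) + 1 = x + 1 := by
          rw [hx_def]; push_cast; ring
        rw [hcast]
        exact le_trans hstep1 (le_trans hans hbern)
  refine ⟨M * C1 / C0, by positivity, fun t _ => ?_⟩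
  have heq : M * C1 / C0 * C0 / (C1 * ((t : ℝ) + 1) ^ w) = M / ((t : ℝ) + 1) ^ w := by
    have hpos : (0:ℝ) < ((t : ℝ) + 1) ^ w := Real.rpow_pos_of_pos (by positivity) w
    field_simp
  rw [heq]
  exact key t
end
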